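/- On ℍ×ℂ, the Levi-Civita connection of the invariant metric ds²_{A,B} = A y^{-2} dz dz̄ + B(v² y^{-3} dz dz̄ + y^{-1} dw dw̄ − v y^{-2} dz dw̄ − v y^{-2} dw dz̄) has Christoffel coefficients giving D(dz) = (i/y + iBv²/(2Ay²)) dz² − (iBv/(Ay)) dz dw + (iB/(2A)) dw², where y = Im z, v = Im w. -/

import Mathlib

open Complex Matrix

/-- The coordinate (Wirtinger) derivatives on ℂ×ℂ with respect to the coordinates
(z, z̄, w, w̄), indexed by Fin 4. -/
noncomputable def coordD (i : Fin 4) (f : ℂ × ℂ → ℂ) (p : ℂ × ℂ) : ℂ :=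
  if i = 0 then ((fderiv ℝ f p) (1, 0) - Complex.I * (fderiv ℝ f p) (Complex.I, 0)) / 2
  else if i = 1 then
    ((fderiv ℝ f p) (1, 0) + Complex.I * (fderiv ℝ f p) (Complex.I, 0)) / 2
  else if i = 2 then
    ((fderiv ℝ f p) (0, 1) - Complex.I * (fderiv ℝ f p) (0, Complex.I)) / 2
  else ((fderiv ℝ f p) (0, 1) + Complex.I * (fderiv ℝ f p) (0, Complex.I)) / 2

/-- The invariant metric matrix ds²_{A,B} on ℍ×ℂ in the coordinates (z, z̄, w, w̄):
g_{zz̄} = A/(2y²)+Bv²/(2y³), g_{zw̄} = g_{wz̄} = −Bv/(2y²), g_{ww̄} = B/(2y). -/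
noncomputable def metricMat (A B : ℝ) (p : ℂ × ℂ) : Matrix (Fin 4) (Fin 4) ℂ :=
  let y : ℝ := p.1.im
  let v : ℝ := p.2.im
  let a : ℂ := ((A / (2 * y ^ 2) + B * v ^ 2 / (2 * y ^ 3) : ℝ) : ℂ)
  let b : ℂ := ((-(B * v / (2 * y ^ 2)) : ℝ) : ℂ)
  let c : ℂ := ((B / (2 * y) : ℝ) : ℂ)
  Matrix.of ![![0, a, 0, b], ![a, 0, b, 0], ![0, b, 0, c], ![b, 0, c, 0]]

/-- The Christoffel symbols Γᵏᵢⱼ = (1/2)·g^{kl}(∂ⱼg_{il} + ∂ᵢg_{jl} − ∂_l g_{ij})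
of the invariant metric. -/
noncomputable def Christoffel (A B : ℝ) (k i j : Fin 4) (p : ℂ × ℂ) : ℂ :=
  (1 / 2) * ∑ l : Fin 4, (metricMat A B p)⁻¹ k l *
    (coordD j (fun q => metricMat A B q i l) p
      + coordD i (fun q => metricMat A B q j l) p
      - coordD l (fun q => metricMat A B q i j) p)

open ContinuousLinearMap in
noncomputable def clmY : (ℂ × ℂ) →L[ℝ] ℝ := Complex.imCLM.comp (fst ℝ ℂ ℂ)
open ContinuousLinearMap in
noncomputable def clmV : (ℂ × ℂ) →L[ℝ] ℝ := Complex.imCLM.comp (snd ℝ ℂ ℂ)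

lemma coordD0_def (f : ℂ × ℂ → ℂ) (p : ℂ × ℂ) :
    coordD 0 f p = ((fderiv ℝ f p) (1, 0) - Complex.I * (fderiv ℝ f p) (Complex.I, 0)) / 2 := rfl

lemma coordD2_def (f : ℂ × ℂ → ℂ) (p : ℂ × ℂ) :
    coordD 2 f p = ((fderiv ℝ f p) (0, 1) - Complex.I * (fderiv ℝ f p) (0, Complex.I)) / 2 := rfl

lemma coordD_const (i : Fin 4) (c : ℂ) (p : ℂ × ℂ) : coordD i (fun _ => c) p = 0 := by
  simp [coordD, fderiv_const]

lemma coordD_ofReal (F : ℂ × ℂ → ℝ) (cy cv : ℝ) (p : ℂ × ℂ)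
    (h : HasFDerivAt F (cy • clmY + cv • clmV) p) :
    coordD 0 (fun q => ((F q : ℝ) : ℂ)) p = -(Complex.I * cy) / 2 ∧
    coordD 2 (fun q => ((F q : ℝ) : ℂ)) p = -(Complex.I * cv) / 2 := by
  have hf : HasFDerivAt (fun q => ((F q : ℝ) : ℂ))
      (Complex.ofRealCLM.comp ((cy • clmY + cv • clmV))) p :=
    Complex.ofRealCLM.hasFDerivAt.comp p h
  constructor
  · rw [coordD0_def, hf.fderiv]
    norm_num [clmY, clmV]
    try ring
  · rw [coordD2_def, hf.fderiv]
    norm_num [clmY, clmV]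
    try ring

lemma hasFDerivAt_entryA (A B : ℝ) (p : ℂ × ℂ) (hy : p.1.im ≠ 0) :
    HasFDerivAt (fun q : ℂ × ℂ => A / (2 * q.1.im ^ 2) + B * q.2.im ^ 2 / (2 * q.1.im ^ 3))
      ((-A / p.1.im ^ 3 - 3 * B * p.2.im ^ 2 / (2 * p.1.im ^ 4)) • clmY
        + (B * p.2.im / p.1.im ^ 3) • clmV) p := by
  have hY : HasFDerivAt (fun q : ℂ × ℂ => q.1.im) clmY p := clmY.hasFDerivAt
  have hV : HasFDerivAt (fun q : ℂ × ℂ => q.2.im) clmV p := clmV.hasFDerivAt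
  have hp2 := (hasDerivAt_pow 2 p.1.im).comp_hasFDerivAt p hY
  have hp3 := (hasDerivAt_pow 3 p.1.im).comp_hasFDerivAt p hY
  have hv2 := (hasDerivAt_pow 2 p.2.im).comp_hasFDerivAt p hV
  have hi2 := (hasDerivAt_inv (pow_ne_zero 2 hy)).comp_hasFDerivAt p hp2
  have hi3 := (hasDerivAt_inv (pow_ne_zero 3 hy)).comp_hasFDerivAt p hp3
  have hsum := (hi2.const_mul (A / 2)).add ((hv2.mul hi3).const_mul (B / 2))
  have hfun : (fun q : ℂ × ℂ => A / (2 * q.1.im ^ 2) + B * q.2.im ^ 2 / (2 * q.1.im ^ 3))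
      = fun q : ℂ × ℂ => A / 2 * (q.1.im ^ 2)⁻¹ + B / 2 * (q.2.im ^ 2 * (q.1.im ^ 3)⁻¹) := by
    funext q; ring
  rw [hfun]
  refine hsum.congr_fderiv ?_
  refine ContinuousLinearMap.ext fun h => ?_
  simp [smul_smul]
  field_simp
  try ring

lemma hasFDerivAt_entryB (B : ℝ) (p : ℂ × ℂ) (hy : p.1.im ≠ 0) :
    HasFDerivAt (fun q : ℂ × ℂ => -(B * q.2.im / (2 * q.1.im ^ 2)))
      ((B * p.2.im / p.1.im ^ 3) • clmY + (-(B / (2 * p.1.im ^ 2))) • clmV) p := by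
  have hY : HasFDerivAt (fun q : ℂ × ℂ => q.1.im) clmY p := clmY.hasFDerivAt
  have hV : HasFDerivAt (fun q : ℂ × ℂ => q.2.im) clmV p := clmV.hasFDerivAt
  have hp2 := (hasDerivAt_pow 2 p.1.im).comp_hasFDerivAt p hY
  have hi2 := (hasDerivAt_inv (pow_ne_zero 2 hy)).comp_hasFDerivAt p hp2
  have hsum := (hV.mul hi2).const_mul (-(B / 2))
  have hfun : (fun q : ℂ × ℂ => -(B * q.2.im / (2 * q.1.im ^ 2)))
      = fun q : ℂ × ℂ => -(B / 2) * (q.2.im * (q.1.im ^ 2)⁻¹) := by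
    funext q; ring
  rw [hfun]
  refine hsum.congr_fderiv ?_
  refine ContinuousLinearMap.ext fun h => ?_
  simp [smul_smul]
  field_simp
  try ring

lemma hasFDerivAt_entryC (B : ℝ) (p : ℂ × ℂ) (hy : p.1.im ≠ 0) :
    HasFDerivAt (fun q : ℂ × ℂ => B / (2 * q.1.im))
      ((-(B / (2 * p.1.im ^ 2))) • clmY + (0 : ℝ) • clmV) p := by
  have hY : HasFDerivAt (fun q : ℂ × ℂ => q.1.im) clmY p := clmY.hasFDerivAt
  have hi1 := (hasDerivAt_inv hy).comp_hasFDerivAt p hY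
  have hsum := hi1.const_mul (B / 2)
  have hfun : (fun q : ℂ × ℂ => B / (2 * q.1.im))
      = fun q : ℂ × ℂ => B / 2 * (q.1.im)⁻¹ := by
    funext q; ring
  rw [hfun]
  refine hsum.congr_fderiv ?_
  refine ContinuousLinearMap.ext fun h => ?_
  simp [smul_smul]
  field_simp
  simp

lemma mm00 (A B : ℝ) (q : ℂ × ℂ) : metricMat A B q 0 0 = 0 := rfl
lemma mm01 (A B : ℝ) (q : ℂ × ℂ) :
    metricMat A B q 0 1 = ((A / (2 * q.1.im ^ 2) + B * q.2.im ^ 2 / (2 * q.1.im ^ 3) : ℝ) : ℂ) := rfl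
lemma mm02 (A B : ℝ) (q : ℂ × ℂ) : metricMat A B q 0 2 = 0 := rfl
lemma mm03 (A B : ℝ) (q : ℂ × ℂ) :
    metricMat A B q 0 3 = ((-(B * q.2.im / (2 * q.1.im ^ 2)) : ℝ) : ℂ) := rfl
lemma mm20 (A B : ℝ) (q : ℂ × ℂ) : metricMat A B q 2 0 = 0 := rfl
lemma mm21 (A B : ℝ) (q : ℂ × ℂ) :
    metricMat A B q 2 1 = ((-(B * q.2.im / (2 * q.1.im ^ 2)) : ℝ) : ℂ) := rfl
lemma mm22 (A B : ℝ) (q : ℂ × ℂ) : metricMat A B q 2 2 = 0 := rfl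
lemma mm23 (A B : ℝ) (q : ℂ × ℂ) :
    metricMat A B q 2 3 = ((B / (2 * q.1.im) : ℝ) : ℂ) := rfl

lemma mm10 (A B : ℝ) (q : ℂ × ℂ) :
    metricMat A B q 1 0 = ((A / (2 * q.1.im ^ 2) + B * q.2.im ^ 2 / (2 * q.1.im ^ 3) : ℝ) : ℂ) := rfl
lemma mm11 (A B : ℝ) (q : ℂ × ℂ) : metricMat A B q 1 1 = 0 := rfl
lemma mm12 (A B : ℝ) (q : ℂ × ℂ) :
    metricMat A B q 1 2 = ((-(B * q.2.im / (2 * q.1.im ^ 2)) : ℝ) : ℂ) := rfl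
lemma mm13 (A B : ℝ) (q : ℂ × ℂ) : metricMat A B q 1 3 = 0 := rfl
lemma mm30 (A B : ℝ) (q : ℂ × ℂ) :
    metricMat A B q 3 0 = ((-(B * q.2.im / (2 * q.1.im ^ 2)) : ℝ) : ℂ) := rfl
lemma mm31 (A B : ℝ) (q : ℂ × ℂ) : metricMat A B q 3 1 = 0 := rfl
lemma mm32 (A B : ℝ) (q : ℂ × ℂ) :
    metricMat A B q 3 2 = ((B / (2 * q.1.im) : ℝ) : ℂ) := rfl
lemma mm33 (A B : ℝ) (q : ℂ × ℂ) : metricMat A B q 3 3 = 0 := rfl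

set_option maxHeartbeats 1000000 in
lemma metricMat_inv (A B : ℝ) (hA : A ≠ 0) (hB : B ≠ 0) (p : ℂ × ℂ) (hy : p.1.im ≠ 0) :
    (metricMat A B p)⁻¹ = Matrix.of
      ![![0, ((2 * p.1.im ^ 2 / A : ℝ) : ℂ), 0, ((2 * p.1.im * p.2.im / A : ℝ) : ℂ)],
        ![((2 * p.1.im ^ 2 / A : ℝ) : ℂ), 0, ((2 * p.1.im * p.2.im / A : ℝ) : ℂ), 0],
        ![0, ((2 * p.1.im * p.2.im / A : ℝ) : ℂ), 0,
          ((2 * p.1.im / B + 2 * p.2.im ^ 2 / A : ℝ) : ℂ)],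
        ![((2 * p.1.im * p.2.im / A : ℝ) : ℂ), 0,
          ((2 * p.1.im / B + 2 * p.2.im ^ 2 / A : ℝ) : ℂ), 0]] := by
  have hyC : ((p.1.im : ℝ) : ℂ) ≠ 0 := Complex.ofReal_ne_zero.mpr hy
  have hAC : ((A : ℝ) : ℂ) ≠ 0 := Complex.ofReal_ne_zero.mpr hA
  have hBC : ((B : ℝ) : ℂ) ≠ 0 := Complex.ofReal_ne_zero.mpr hB
  refine Matrix.inv_eq_right_inv ?_
  ext i j
  fin_cases i <;> fin_cases j <;>
    simp only [Fin.zero_eta, Fin.mk_one, Fin.reduceFinMk, Matrix.mul_apply, Fin.sum_univ_four, mm00, mm01, mm02, mm03, mm10, mm11, mm12,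
      mm13, mm20, mm21, mm22, mm23, mm30, mm31, mm32, mm33, Matrix.of_apply, Matrix.cons_val',
      Matrix.cons_val_zero, Matrix.cons_val_one, Matrix.head_cons, Matrix.empty_val',
      Matrix.cons_val_fin_one, Matrix.head_fin_const, Matrix.cons_val_two, Matrix.cons_val_three,
      Matrix.tail_cons, Matrix.cons_val, Matrix.one_apply, Fin.isValue, Fin.reduceEq, reduceIte] <;>
    (try norm_num) <;> (norm_cast; field_simp; try ring) <;> (push_cast; ring)

set_option maxHeartbeats 1000000 in
/-- the (1,0)-part of the Levi-Civita connection of the invariant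
metric ds²_{A,B} on ℍ×ℂ satisfies
D(dz) = (i/y + iBv²/(2Ay²)) dz² − (iBv/(Ay)) dz dw + (iB/(2A)) dw²,
i.e. the Christoffel symbols with upper index z and lower holomorphic indices are
Γᶻ_{zz} = i/y + iBv²/(2Ay²), Γᶻ_{zw} = Γᶻ_{wz} = −iBv/(2Ay), Γᶻ_{ww} = iB/(2A). -/
theorem christoffel_Ddz (A B : ℝ) (hA : 0 < A) (hB : 0 < B)
    (p : ℂ × ℂ) (hy : 0 < p.1.im) :
    Christoffel A B 0 0 0 p =
      Complex.I / ((p.1.im : ℝ) : ℂ) +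
        Complex.I * (B : ℂ) * ((p.2.im : ℝ) : ℂ) ^ 2 /
          (2 * (A : ℂ) * ((p.1.im : ℝ) : ℂ) ^ 2) ∧
    Christoffel A B 0 0 2 p =
      -(Complex.I * (B : ℂ) * ((p.2.im : ℝ) : ℂ) /
        (2 * (A : ℂ) * ((p.1.im : ℝ) : ℂ))) ∧
    Christoffel A B 0 2 0 p =
      -(Complex.I * (B : ℂ) * ((p.2.im : ℝ) : ℂ) /
        (2 * (A : ℂ) * ((p.1.im : ℝ) : ℂ))) ∧
    Christoffel A B 0 2 2 p = Complex.I * (B : ℂ) / (2 * (A : ℂ)) := by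
  have hy0 : p.1.im ≠ 0 := ne_of_gt hy
  have hA0 : A ≠ 0 := ne_of_gt hA
  have hB0 : B ≠ 0 := ne_of_gt hB
  have hyC : ((p.1.im : ℝ) : ℂ) ≠ 0 := Complex.ofReal_ne_zero.mpr hy0
  have hAC : ((A : ℝ) : ℂ) ≠ 0 := Complex.ofReal_ne_zero.mpr hA0
  have hBC : ((B : ℝ) : ℂ) ≠ 0 := Complex.ofReal_ne_zero.mpr hB0
  obtain ⟨hca0, hca2⟩ := coordD_ofReal _ _ _ p (hasFDerivAt_entryA A B p hy0)
  obtain ⟨hcb0, hcb2⟩ := coordD_ofReal _ _ _ p (hasFDerivAt_entryB B p hy0)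
  obtain ⟨hcc0, hcc2⟩ := coordD_ofReal _ _ _ p (hasFDerivAt_entryC B p hy0)
  have hinv := metricMat_inv A B hA0 hB0 p hy0
  refine ⟨?_, ?_, ?_, ?_⟩ <;>
  · rw [Christoffel, Fin.sum_univ_four, hinv]
    simp only [mm00, mm01, mm02, mm03, mm20, mm21, mm22, mm23]
    simp only [hca0, hca2, hcb0, hcb2, hcc0, hcc2, coordD_const]
    simp only [Matrix.of_apply, Matrix.cons_val', Matrix.cons_val_zero, Matrix.cons_val_one,
      Matrix.head_cons, Matrix.empty_val', Matrix.cons_val_fin_one, Matrix.head_fin_const,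
      Matrix.cons_val_two, Matrix.cons_val_three, Matrix.tail_cons,
      Matrix.cons_val]
    push_cast
    field_simp [hyC, hAC, hBC]
    ring_nf
    try ring
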